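/- On ℝ³ with the Heisenberg horizontal gradient ∇_H f = (X₁f, X₂f), where X₁f(x) = ∂f/∂x₁ + 2x₂ ∂f/∂x₃ and X₂f(x) = ∂f/∂x₂ − 2x₁ ∂f/∂x₃, let n = (n₁,n₂,n₃) ∈ ℝ³ be a unit vector, d ∈ ℝ, and let Ω⁺ = {x ∈ ℝ³ : x₁n₁ + x₂n₂ + x₃n₃ > d}. Then for every p > 1, every γ ∈ ℝ, and every f ∈ C₀^∞(Ω⁺): ∫_{Ω⁺} |∇_H f(x)|^p dx ≥ −(p−1)(|γ|^{p/(p−1)} + γ) ∫_{Ω⁺} ( ((n₁ + 2x₂n₃)² + (n₂ − 2x₁n₃)²)^{p/2} / (x₁n₁ + x₂n₂ + x₃n₃ − d)^p ) |f(x)|^p dx. -/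

import Mathlib

open MeasureTheory Real
open Filter Topology

/-- The Heisenberg vector field `X₁ f = ∂f/∂x₁ + 2x₂ ∂f/∂x₃` on `ℝ³`. -/
noncomputable def X1H (f : (Fin 3 → ℝ) → ℝ) (x : Fin 3 → ℝ) : ℝ :=
  fderiv ℝ f x ![1, 0, 2 * x 1]

/-- The Heisenberg vector field `X₂ f = ∂f/∂x₂ − 2x₁ ∂f/∂x₃` on `ℝ³`. -/
noncomputable def X2H (f : (Fin 3 → ℝ) → ℝ) (x : Fin 3 → ℝ) : ℝ :=
  fderiv ℝ f x ![0, 1, -2 * x 0]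

lemma abs_psi_eq {p t : ℝ} (hp : 1 < p) :
    |(|t| ^ (p - 2) * t)| = |t| ^ (p - 1) := by
  rcases eq_or_ne t 0 with rfl | ht
  · simp [Real.zero_rpow (by linarith : p - 1 ≠ 0)]
  · rw [abs_mul, abs_of_nonneg (Real.rpow_nonneg (abs_nonneg t) _), ← Real.rpow_add_one (abs_ne_zero.2 ht)]
    ring_nf

lemma psi_cont {p : ℝ} (hp : 1 < p) : Continuous fun t : ℝ => |t| ^ (p - 2) * t := by
  rw [continuous_iff_continuousAt]
  intro t
  rcases eq_or_ne t 0 with rfl | ht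
  · have h1 : Tendsto (fun t : ℝ => |t| ^ (p - 1)) (𝓝 0) (𝓝 (|(0:ℝ)| ^ (p - 1))) :=
      (continuous_abs.rpow_const (fun _ => Or.inr (by linarith))).tendsto 0
    have h0 : |(0:ℝ)| ^ (p - 1) = 0 := by
      simp [Real.zero_rpow (by linarith : p - 1 ≠ 0)]
    rw [ContinuousAt]
    have h2 : |(0:ℝ)| ^ (p-2) * 0 = 0 := by simp
    rw [h2]
    apply squeeze_zero_norm (fun s => (abs_psi_eq hp).le)
    rw [h0] at h1; exact h1
  · exact (((continuous_abs.continuousAt).rpow_const (Or.inl (abs_ne_zero.2 ht))).mul continuousAt_id)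

section glue
variable {X : Type*} [TopologicalSpace X]

lemma glue_cont {Ω K : Set X} (hΩ : IsOpen Ω) (hK : IsClosed K) (hKΩ : K ⊆ Ω) {u : X → ℝ}
    (h1 : ContinuousOn u Ω) (h0 : ∀ x ∉ K, u x = 0) : Continuous u := by
  rw [continuous_iff_continuousAt]
  intro x
  by_cases hx : x ∈ Ω
  · exact h1.continuousAt (hΩ.mem_nhds hx)
  · have hxK : x ∉ K := fun h => hx (hKΩ h)
    have hev : ∀ᶠ y in 𝓝 x, (fun _ => (0:ℝ)) y = u y :=
      Filter.eventually_of_mem (hK.isOpen_compl.mem_nhds hxK) (fun y hy => (h0 y hy).symm)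
    exact ContinuousAt.congr continuousAt_const hev
end glue

section ibp

lemma hcs_of_subset {G : (Fin 3 → ℝ) → ℝ} {u : (Fin 3 → ℝ) → ℝ} (hGc : HasCompactSupport G)
    (h : ∀ x, G x = 0 → u x = 0) : HasCompactSupport u := by
  apply HasCompactSupport.intro hGc
  intro x hx
  exact h x (image_eq_zero_of_notMem_tsupport hx)

lemma ibp_const {G : (Fin 3 → ℝ) → ℝ} (hG : Differentiable ℝ G)
    (hGc : HasCompactSupport G) {v : Fin 3 → ℝ}
    (hG'c : Continuous fun x => fderiv ℝ G x v) :
    ∫ x : Fin 3 → ℝ, fderiv ℝ G x v = 0 := by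
  have hGcont : Continuous G := hG.continuous
  have hsupp : HasCompactSupport fun x => fderiv ℝ G x v := by
    apply HasCompactSupport.intro hGc
    intro x hx
    rw [fderiv_of_notMem_tsupport _ hx]; rfl
  have h1 : Integrable (fun x : Fin 3 → ℝ => (1:ℝ) * fderiv ℝ G x v) := by
    simpa using hG'c.integrable_of_hasCompactSupport hsupp
  have h2 : Integrable (fun x : Fin 3 → ℝ => fderiv ℝ (fun _ : Fin 3 → ℝ => (1:ℝ)) x v * G x) := by
    simp [fderiv_const]
  have h3 : Integrable (fun x : Fin 3 → ℝ => (1:ℝ) * G x) := by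
    simpa using hGcont.integrable_of_hasCompactSupport hGc
  have := integral_mul_fderiv_eq_neg_fderiv_mul_of_integrable (𝕜 := ℝ) h2 h1 h3
    (fun x _ => differentiable_const (1:ℝ) x) (fun x _ => hG x) (v := v)
  simpa [fderiv_const] using this

lemma ibp_lin {G : (Fin 3 → ℝ) → ℝ} (hG : Differentiable ℝ G)
    (hGc : HasCompactSupport G) {v : Fin 3 → ℝ} (c : ℝ) (j : Fin 3) (hvj : v j = 0)
    (hG'c : Continuous fun x => fderiv ℝ G x v) :
    ∫ x : Fin 3 → ℝ, (c * x j) * fderiv ℝ G x v = 0 := by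
  have hGcont : Continuous G := hG.continuous
  have hcd : ∀ x : Fin 3 → ℝ, HasFDerivAt (fun y : Fin 3 → ℝ => c * y j)
      (c • (ContinuousLinearMap.proj j : (Fin 3 → ℝ) →L[ℝ] ℝ)) x := by
    intro x
    have hproj : HasFDerivAt (fun y : Fin 3 → ℝ => y j)
        (ContinuousLinearMap.proj j : (Fin 3 → ℝ) →L[ℝ] ℝ) x :=
      hasFDerivAt_apply j x
    exact hproj.const_mul c
  have hcder : ∀ x : Fin 3 → ℝ, fderiv ℝ (fun y : Fin 3 → ℝ => c * y j) x v = 0 := by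
    intro x
    rw [(hcd x).fderiv]
    simp [hvj]
  have hccont : Continuous fun x : Fin 3 → ℝ => c * x j :=
    continuous_const.mul (continuous_apply j)
  have hsupp : HasCompactSupport fun x => (c * x j) * fderiv ℝ G x v := by
    apply HasCompactSupport.intro hGc
    intro x hx
    rw [fderiv_of_notMem_tsupport _ hx]
    simp
  have h1 : Integrable (fun x : Fin 3 → ℝ => (c * x j) * fderiv ℝ G x v) :=
    (hccont.mul hG'c).integrable_of_hasCompactSupport hsupp
  have h2 : Integrable (fun x : Fin 3 → ℝ => fderiv ℝ (fun y : Fin 3 → ℝ => c * y j) x v * G x) := by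
    have : (fun x : Fin 3 → ℝ => fderiv ℝ (fun y : Fin 3 → ℝ => c * y j) x v * G x) = fun _ => 0 := by
      funext x; rw [hcder x]; ring
    rw [this]; exact integrable_zero _ _ _
  have h3 : Integrable (fun x : Fin 3 → ℝ => (c * x j) * G x) := by
    apply (hccont.mul hGcont).integrable_of_hasCompactSupport
    apply HasCompactSupport.intro hGc
    intro x hx
    rw [Pi.mul_apply, image_eq_zero_of_notMem_tsupport hx]; ring
  have := integral_mul_fderiv_eq_neg_fderiv_mul_of_integrable (𝕜 := ℝ) h2 h1 h3
    (fun x _ => ((hcd x).differentiableAt)) (fun x _ => hG x) (v := v)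
  rw [this]
  rw [show (fun x : Fin 3 → ℝ => fderiv ℝ (fun y : Fin 3 → ℝ => c * y j) x v * G x) = fun _ => 0 by
    funext x; rw [hcder x]; ring]
  simp

end ibp

noncomputable section S10
open ContinuousLinearMap in
def pr3 (i : Fin 3) : (Fin 3 → ℝ) →L[ℝ] ℝ := ContinuousLinearMap.proj i

variable (n : Fin 3 → ℝ) (d p γ ε : ℝ) (f : (Fin 3 → ℝ) → ℝ)

def ww (x : Fin 3 → ℝ) : ℝ := x 0 * n 0 + x 1 * n 1 + x 2 * n 2 - d
def aa (x : Fin 3 → ℝ) : ℝ := n 0 + 2 * x 1 * n 2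
def bb (x : Fin 3 → ℝ) : ℝ := n 1 - 2 * x 0 * n 2
def gg (x : Fin 3 → ℝ) : ℝ := aa n x * aa n x + bb n x * bb n x
def FF (x : Fin 3 → ℝ) : ℝ := |f x| ^ p
def SS (x : Fin 3 → ℝ) : ℝ := (gg n x + ε) ^ ((p - 2) / 2)
def SS' (x : Fin 3 → ℝ) : ℝ := (gg n x + ε) ^ ((p - 4) / 2)
def WF1 (x : Fin 3 → ℝ) : ℝ := ww n d x ^ (1 - p) * FF p f x
def WF0 (x : Fin 3 → ℝ) : ℝ := ww n d x ^ (-p) * FF p f x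
def WFψ (x : Fin 3 → ℝ) : ℝ := ww n d x ^ (1 - p) * (|f x| ^ (p - 2) * f x)
def G1 (x : Fin 3 → ℝ) : ℝ := γ * (SS n p ε x * aa n x) * WF1 n d p f x
def G2 (x : Fin 3 → ℝ) : ℝ := γ * (SS n p ε x * bb n x) * WF1 n d p f x

def Lw : (Fin 3 → ℝ) →L[ℝ] ℝ := n 0 • pr3 0 + n 1 • pr3 1 + n 2 • pr3 2
def La : (Fin 3 → ℝ) →L[ℝ] ℝ := (2 * n 2) • pr3 1
def Lb : (Fin 3 → ℝ) →L[ℝ] ℝ := (-(2 * n 2)) • pr3 0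

def D1 (x : Fin 3 → ℝ) : (Fin 3 → ℝ) →L[ℝ] ℝ :=
  (γ * ((p - 2) / 2 * SS' n p ε x * (2 * aa n x * aa n x) + SS n p ε x) * WF1 n d p f x) • La n
    + (γ * ((p - 2) / 2 * SS' n p ε x * (2 * aa n x * bb n x)) * WF1 n d p f x) • Lb n
    + (γ * ((1 - p) * SS n p ε x * aa n x) * WF0 n d p f x) • Lw n
    + (γ * (SS n p ε x * aa n x * p) * WFψ n d p f x) • fderiv ℝ f x

def D2 (x : Fin 3 → ℝ) : (Fin 3 → ℝ) →L[ℝ] ℝ :=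
  (γ * ((p - 2) / 2 * SS' n p ε x * (2 * aa n x * bb n x)) * WF1 n d p f x) • La n
    + (γ * ((p - 2) / 2 * SS' n p ε x * (2 * bb n x * bb n x) + SS n p ε x) * WF1 n d p f x) • Lb n
    + (γ * ((1 - p) * SS n p ε x * bb n x) * WF0 n d p f x) • Lw n
    + (γ * (SS n p ε x * bb n x * p) * WFψ n d p f x) • fderiv ℝ f x

lemma hasFDerivAt_ww (x : Fin 3 → ℝ) : HasFDerivAt (ww n d) (Lw n) x := by
  have h0 : HasFDerivAt (fun y : Fin 3 → ℝ => y 0) (pr3 0) x := hasFDerivAt_apply 0 x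
  have h1 : HasFDerivAt (fun y : Fin 3 → ℝ => y 1) (pr3 1) x := hasFDerivAt_apply 1 x
  have h2 : HasFDerivAt (fun y : Fin 3 → ℝ => y 2) (pr3 2) x := hasFDerivAt_apply 2 x
  have := (((h0.mul_const (n 0)).add (h1.mul_const (n 1))).add (h2.mul_const (n 2))).sub_const d
  refine this.congr_fderiv ?_
  ext v
  simp [Lw, pr3]
  try ring

lemma hasFDerivAt_aa (x : Fin 3 → ℝ) : HasFDerivAt (aa n) (La n) x := by
  have h1 : HasFDerivAt (fun y : Fin 3 → ℝ => y 1) (pr3 1) x := hasFDerivAt_apply 1 x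
  have := (((h1.const_mul 2).mul_const (n 2)).const_add (n 0))
  refine this.congr_fderiv ?_
  ext v
  simp [La, pr3]
  try ring

lemma hasFDerivAt_bb (x : Fin 3 → ℝ) : HasFDerivAt (bb n) (Lb n) x := by
  have h0 : HasFDerivAt (fun y : Fin 3 → ℝ => y 0) (pr3 0) x := hasFDerivAt_apply 0 x
  have := HasFDerivAt.const_sub (((h0.const_mul 2).mul_const (n 2))) (n 1)
  refine this.congr_fderiv ?_
  ext v
  simp [Lb, pr3]
  try ring

lemma hasFDerivAt_gg (x : Fin 3 → ℝ) :
    HasFDerivAt (gg n) ((2 * aa n x) • La n + (2 * bb n x) • Lb n) x := by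
  have ha := hasFDerivAt_aa n x
  have hb := hasFDerivAt_bb n x
  have := (ha.mul ha).add (hb.mul hb)
  refine this.congr_fderiv ?_
  ext v
  simp
  try ring

lemma gg_nonneg (x : Fin 3 → ℝ) : 0 ≤ gg n x :=
  add_nonneg (mul_self_nonneg _) (mul_self_nonneg _)

lemma hasFDerivAt_SS (hε : 0 < ε) (x : Fin 3 → ℝ) :
    HasFDerivAt (SS n p ε)
      (((p - 2) / 2 * SS' n p ε x) • ((2 * aa n x) • La n + (2 * bb n x) • Lb n)) x := by
  have hpos : 0 < gg n x + ε := lt_of_lt_of_le hε (le_add_of_nonneg_left (gg_nonneg n x))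
  have hbase : HasFDerivAt (fun y => gg n y + ε)
      ((2 * aa n x) • La n + (2 * bb n x) • Lb n) x := (hasFDerivAt_gg n x).add_const ε
  have := (Real.hasDerivAt_rpow_const (x := gg n x + ε) (p := (p - 2) / 2)
    (Or.inl hpos.ne')).comp_hasFDerivAt x hbase
  rw [show (p - 2) / 2 - 1 = (p - 4) / 2 by ring] at this
  exact this.congr_fderiv rfl

lemma hasFDerivAt_G1G2 (hp : 1 < p) (hε : 0 < ε) (hfd : Differentiable ℝ f)
    (hfs : tsupport f ⊆ {x : Fin 3 → ℝ | 0 < ww n d x}) (x : Fin 3 → ℝ) :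
    HasFDerivAt (G1 n d p γ ε f) (D1 n d p γ ε f x) x ∧
      HasFDerivAt (G2 n d p γ ε f) (D2 n d p γ ε f x) x := by
  by_cases hx : 0 < ww n d x
  · have hw := hasFDerivAt_ww n d x
    have ha := hasFDerivAt_aa n x
    have hb := hasFDerivAt_bb n x
    have hS := hasFDerivAt_SS n p ε hε x
    have hWp : HasFDerivAt (fun y => ww n d y ^ (1 - p)) (((1 - p) * ww n d x ^ (-p)) • Lw n) x := by
      have := (Real.hasDerivAt_rpow_const (x := ww n d x) (p := 1 - p)
        (Or.inl hx.ne')).comp_hasFDerivAt x hw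
      rw [show 1 - p - 1 = -p by ring] at this
      exact this
    have hF : HasFDerivAt (FF p f) ((p * |f x| ^ (p - 2) * f x) • fderiv ℝ f x) x := by
      have hfdx : HasFDerivAt f (fderiv ℝ f x) x := (hfd x).hasFDerivAt
      exact (hasDerivAt_abs_rpow (f x) hp).comp_hasFDerivAt x hfdx
    constructor
    · have h1 := ((hS.mul ha).const_mul γ).mul (hWp.mul hF)
      refine h1.congr_fderiv ?_
      ext v
      simp only [D1, WF1, WF0, WFψ, ContinuousLinearMap.add_apply, ContinuousLinearMap.smul_apply,
        ContinuousLinearMap.coe_smul', Pi.smul_apply, smul_eq_mul, Pi.mul_apply]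
      ring
    · have h1 := ((hS.mul hb).const_mul γ).mul (hWp.mul hF)
      refine h1.congr_fderiv ?_
      ext v
      simp only [D2, WF1, WF0, WFψ, ContinuousLinearMap.add_apply, ContinuousLinearMap.smul_apply,
        ContinuousLinearMap.coe_smul', Pi.smul_apply, smul_eq_mul, Pi.mul_apply]
      ring
  · have hxK : x ∉ tsupport f := fun h => hx (hfs h)
    have hev : ∀ᶠ y in 𝓝 x, f y = 0 :=
      Filter.eventually_of_mem ((isClosed_tsupport f).isOpen_compl.mem_nhds hxK)
        (fun y hy => image_eq_zero_of_notMem_tsupport hy)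
    have hFev : ∀ᶠ y in 𝓝 x, FF p f y = 0 := by
      filter_upwards [hev] with y hy
      simp [FF, hy, Real.zero_rpow (by linarith : p ≠ 0)]
    have hfx : f x = 0 := image_eq_zero_of_notMem_tsupport hxK
    have hFx : FF p f x = 0 := by simp [FF, hfx, Real.zero_rpow (by linarith : p ≠ 0)]
    constructor
    · have h0 : HasFDerivAt (G1 n d p γ ε f) (0 : (Fin 3 → ℝ) →L[ℝ] ℝ) x := by
        have h00 : HasFDerivAt (fun _ : Fin 3 → ℝ => (0:ℝ)) (0 : (Fin 3 → ℝ) →L[ℝ] ℝ) x :=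
          hasFDerivAt_const 0 x
        refine h00.congr_of_eventuallyEq ?_
        filter_upwards [hFev] with y hy
        simp [G1, WF1, hy]
      refine h0.congr_fderiv ?_
      ext v
      simp [D1, WF1, WF0, WFψ, hFx, hfx]
    · have h0 : HasFDerivAt (G2 n d p γ ε f) (0 : (Fin 3 → ℝ) →L[ℝ] ℝ) x := by
        have h00 : HasFDerivAt (fun _ : Fin 3 → ℝ => (0:ℝ)) (0 : (Fin 3 → ℝ) →L[ℝ] ℝ) x :=
          hasFDerivAt_const 0 x
        refine h00.congr_of_eventuallyEq ?_
        filter_upwards [hFev] with y hy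
        simp [G2, WF1, hy]
      refine h0.congr_fderiv ?_
      ext v
      simp [D2, WF1, WF0, WFψ, hFx, hfx]

def RR (x : Fin 3 → ℝ) : ℝ := SS n p ε x * gg n x * WF0 n d p f x
def KK (x : Fin 3 → ℝ) : ℝ :=
  (gg n x + ε) ^ ((p - 2) / 2 * (p / (p - 1))) * gg n x ^ (p / (p - 1) / 2) * WF0 n d p f x
def R0 (x : Fin 3 → ℝ) : ℝ := gg n x ^ (p / 2) * WF0 n d p f x

lemma pointwise_ineq (hp : 1 < p) (hε : 0 < ε) (hfd : Differentiable ℝ f)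
    (hfs : tsupport f ⊆ {x : Fin 3 → ℝ | 0 < ww n d x}) (x : Fin 3 → ℝ) :
    γ * (1 - p) * RR n d p ε f x - (p - 1) * |γ| ^ (p / (p - 1)) * KK n d p ε f x
        - (D1 n d p γ ε f x ![1, 0, 2 * x 1] + D2 n d p γ ε f x ![0, 1, -2 * x 0])
      ≤ ((X1H f x) ^ 2 + (X2H f x) ^ 2) ^ (p / 2) := by
  have hq : (p : ℝ).HolderConjugate (p / (p - 1)) := Real.HolderConjugate.conjExponent hp
  by_cases hx : 0 < ww n d x
  · set A := X1H f x with hA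
    set B := X2H f x with hB
    have hgg : 0 ≤ gg n x := gg_nonneg n x
    have hggε : 0 < gg n x + ε := lt_of_lt_of_le hε (le_add_of_nonneg_left hgg)
    have hSS : 0 ≤ SS n p ε x := Real.rpow_nonneg hggε.le _
    have hw1p : 0 ≤ ww n d x ^ (1 - p) := Real.rpow_nonneg hx.le _
    -- evaluate the divergence
    have hsum : D1 n d p γ ε f x ![1, 0, 2 * x 1] + D2 n d p γ ε f x ![0, 1, -2 * x 0]
        = γ * (1 - p) * RR n d p ε f x
          + γ * p * SS n p ε x * WFψ n d p f x * (aa n x * A + bb n x * B) := by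
      simp only [D1, D2, RR, WF1, WF0, WFψ, La, Lb, Lw, pr3, hA, hB, X1H, X2H, aa, bb, gg,
        ContinuousLinearMap.add_apply, ContinuousLinearMap.smul_apply,
        ContinuousLinearMap.proj_apply, smul_eq_mul,
        Matrix.cons_val_zero, Matrix.cons_val_one, Matrix.head_cons, Matrix.cons_val_two,
        Matrix.tail_cons]
      ring
    rw [hsum]
    -- define Young's inequality quantities
    set X := Real.sqrt (A ^ 2 + B ^ 2) with hX
    set Y := |γ| * (SS n p ε x * (Real.sqrt (gg n x) *
      (|f x| ^ (p - 1) * ww n d x ^ (1 - p)))) with hY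
    have hXnn : 0 ≤ X := Real.sqrt_nonneg _
    have hYnn : 0 ≤ Y := by
      apply mul_nonneg (abs_nonneg _)
      apply mul_nonneg hSS
      apply mul_nonneg (Real.sqrt_nonneg _)
      exact mul_nonneg (Real.rpow_nonneg (abs_nonneg _) _) hw1p
    -- Cauchy–Schwarz bound for the cross term
    have hCS : |aa n x * A + bb n x * B| ≤ Real.sqrt (gg n x) * X := by
      have h2 : (aa n x * A + bb n x * B) ^ 2 ≤ gg n x * (A ^ 2 + B ^ 2) := by
        simp only [gg]
        nlinarith [sq_nonneg (aa n x * B - bb n x * A)]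
      calc |aa n x * A + bb n x * B| ≤ Real.sqrt (gg n x * (A ^ 2 + B ^ 2)) := by
            rw [← Real.sqrt_sq_eq_abs]; exact Real.sqrt_le_sqrt h2
        _ = Real.sqrt (gg n x) * X := Real.sqrt_mul hgg _
    -- bound on the T term
    have habsψ : |WFψ n d p f x| = ww n d x ^ (1 - p) * |f x| ^ (p - 1) := by
      rw [WFψ, abs_mul, abs_of_nonneg hw1p, abs_psi_eq hp]
    have hT : -(γ * p * SS n p ε x * WFψ n d p f x * (aa n x * A + bb n x * B))
        ≤ p * (X * Y) := by
      have h1 : -(γ * p * SS n p ε x * WFψ n d p f x * (aa n x * A + bb n x * B))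
          ≤ |γ * p * SS n p ε x * WFψ n d p f x * (aa n x * A + bb n x * B)| :=
        neg_le_abs _
      refine h1.trans ?_
      rw [abs_mul, abs_mul, abs_mul, abs_mul, abs_of_nonneg hSS,
        abs_of_nonneg (by linarith : (0:ℝ) ≤ p), habsψ]
      calc |γ| * p * SS n p ε x * (ww n d x ^ (1 - p) * |f x| ^ (p - 1))
            * |aa n x * A + bb n x * B|
          ≤ |γ| * p * SS n p ε x * (ww n d x ^ (1 - p) * |f x| ^ (p - 1))
            * (Real.sqrt (gg n x) * X) := by
            apply mul_le_mul_of_nonneg_left hCS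
            apply mul_nonneg
            apply mul_nonneg (mul_nonneg (abs_nonneg _) (by linarith)) hSS
            exact mul_nonneg hw1p (Real.rpow_nonneg (abs_nonneg _) _)
        _ = p * (X * Y) := by rw [hY]; ring
    -- Young's inequality
    have hyoung : p * (X * Y) ≤ X ^ p + (p - 1) * Y ^ (p / (p - 1)) := by
      have h := Real.young_inequality_of_nonneg hXnn hYnn hq
      have hdiv : p / (p / (p - 1)) = p - 1 := hq.div_conj_eq_sub_one
      have := mul_le_mul_of_nonneg_left h (by linarith : (0:ℝ) ≤ p)
      calc p * (X * Y) ≤ p * (X ^ p / p + Y ^ (p / (p - 1)) / (p / (p - 1))) := this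
        _ = X ^ p + (p / (p / (p - 1))) * Y ^ (p / (p - 1)) := by
            field_simp
        _ = X ^ p + (p - 1) * Y ^ (p / (p - 1)) := by rw [hdiv]
    -- identify the two powers
    have hXp : X ^ p = (A ^ 2 + B ^ 2) ^ (p / 2) := by
      rw [hX, Real.sqrt_eq_rpow, ← Real.rpow_mul (by positivity : (0:ℝ) ≤ A ^ 2 + B ^ 2),
        show (1:ℝ) / 2 * p = p / 2 by ring]
    have hq2 : (p - 1) * (p / (p - 1)) = p := by
      rw [mul_comm]
      exact div_mul_cancel₀ p (by linarith : p - 1 ≠ 0)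
    have hq3 : (1 - p) * (p / (p - 1)) = -p := by linear_combination -hq2
    have hYqKK : Y ^ (p / (p - 1)) = |γ| ^ (p / (p - 1)) * KK n d p ε f x := by
      rw [hY, KK, WF0, FF]
      rw [Real.mul_rpow (abs_nonneg γ) (mul_nonneg hSS (mul_nonneg (Real.sqrt_nonneg _)
        (mul_nonneg (Real.rpow_nonneg (abs_nonneg _) _) hw1p)))]
      rw [Real.mul_rpow hSS (mul_nonneg (Real.sqrt_nonneg _)
        (mul_nonneg (Real.rpow_nonneg (abs_nonneg _) _) hw1p))]
      rw [Real.mul_rpow (Real.sqrt_nonneg _)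
        (mul_nonneg (Real.rpow_nonneg (abs_nonneg _) _) hw1p)]
      rw [Real.mul_rpow (Real.rpow_nonneg (abs_nonneg _) _) hw1p]
      rw [SS, ← Real.rpow_mul hggε.le]
      rw [Real.sqrt_eq_rpow, ← Real.rpow_mul hgg]
      rw [← Real.rpow_mul (abs_nonneg (f x))]
      rw [← Real.rpow_mul hx.le]
      rw [show (1:ℝ) / 2 * (p / (p - 1)) = p / (p - 1) / 2 by ring, hq2, hq3]
      ring
    have hfinal : -(γ * p * SS n p ε x * WFψ n d p f x * (aa n x * A + bb n x * B))
        ≤ (A ^ 2 + B ^ 2) ^ (p / 2) + (p - 1) * (|γ| ^ (p / (p - 1)) * KK n d p ε f x) := by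
      calc -(γ * p * SS n p ε x * WFψ n d p f x * (aa n x * A + bb n x * B))
          ≤ p * (X * Y) := hT
        _ ≤ X ^ p + (p - 1) * Y ^ (p / (p - 1)) := hyoung
        _ = (A ^ 2 + B ^ 2) ^ (p / 2) + (p - 1) * (|γ| ^ (p / (p - 1)) * KK n d p ε f x) := by
            rw [hXp, hYqKK]
    linarith
  · have hxK : x ∉ tsupport f := fun h => hx (hfs h)
    have hfx : f x = 0 := image_eq_zero_of_notMem_tsupport hxK
    have hfd0 : fderiv ℝ f x = 0 := fderiv_of_notMem_tsupport _ hxK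
    have hF0 : FF p f x = 0 := by simp [FF, hfx, Real.zero_rpow (by linarith : p ≠ 0)]
    have hX1 : X1H f x = 0 := by simp [X1H, hfd0]
    have hX2 : X2H f x = 0 := by simp [X2H, hfd0]
    have hLHS : γ * (1 - p) * RR n d p ε f x - (p - 1) * |γ| ^ (p / (p - 1)) * KK n d p ε f x
        - (D1 n d p γ ε f x ![1, 0, 2 * x 1] + D2 n d p γ ε f x ![0, 1, -2 * x 0]) = 0 := by
      simp [D1, D2, RR, KK, WF1, WF0, WFψ, hF0, hfx]
    rw [hLHS, hX1, hX2]
    positivity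

lemma cont_ww : Continuous (ww n d) := by unfold ww; fun_prop
lemma cont_aa : Continuous (aa n) := by unfold aa; fun_prop
lemma cont_bb : Continuous (bb n) := by unfold bb; fun_prop
lemma cont_gg : Continuous (gg n) := by unfold gg aa bb; fun_prop

lemma isOpen_ww : IsOpen {x : Fin 3 → ℝ | 0 < ww n d x} := isOpen_lt continuous_const (cont_ww n d)

lemma cont_SS (hε : 0 < ε) : Continuous (SS n p ε) := by
  refine ((cont_gg n).add continuous_const).rpow_const fun x => Or.inl ?_
  exact (lt_of_lt_of_le hε (le_add_of_nonneg_left (gg_nonneg n x))).ne'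

lemma cont_SS' (hε : 0 < ε) : Continuous (SS' n p ε) := by
  refine ((cont_gg n).add continuous_const).rpow_const fun x => Or.inl ?_
  exact (lt_of_lt_of_le hε (le_add_of_nonneg_left (gg_nonneg n x))).ne'

lemma cont_FF (hp : 1 < p) (hfc : Continuous f) : Continuous (FF p f) :=
  (continuous_abs.comp hfc).rpow_const fun _ => Or.inr (by linarith)

lemma cont_psif (hp : 1 < p) (hfc : Continuous f) :
    Continuous fun x => |f x| ^ (p - 2) * f x := (psi_cont hp).comp hfc

lemma FF_zero (hp : 1 < p) {x : Fin 3 → ℝ} (hx : f x = 0) : FF p f x = 0 := by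
  simp [FF, hx, Real.zero_rpow (by linarith : p ≠ 0)]

lemma cont_WF1 (hp : 1 < p) (hfc : Continuous f)
    (hfs : tsupport f ⊆ {x : Fin 3 → ℝ | 0 < ww n d x}) : Continuous (WF1 n d p f) := by
  refine glue_cont (isOpen_ww n d) (isClosed_tsupport f) hfs ?_ ?_
  · exact (((cont_ww n d).continuousOn).rpow_const fun x hx => Or.inl (ne_of_gt hx)).mul
      ((cont_FF p f hp hfc).continuousOn)
  · intro x hx
    simp [WF1, FF_zero p f hp (image_eq_zero_of_notMem_tsupport hx)]

lemma cont_WF0 (hp : 1 < p) (hfc : Continuous f)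
    (hfs : tsupport f ⊆ {x : Fin 3 → ℝ | 0 < ww n d x}) : Continuous (WF0 n d p f) := by
  refine glue_cont (isOpen_ww n d) (isClosed_tsupport f) hfs ?_ ?_
  · exact (((cont_ww n d).continuousOn).rpow_const fun x hx => Or.inl (ne_of_gt hx)).mul
      ((cont_FF p f hp hfc).continuousOn)
  · intro x hx
    simp [WF0, FF_zero p f hp (image_eq_zero_of_notMem_tsupport hx)]

lemma cont_WFψ (hp : 1 < p) (hfc : Continuous f)
    (hfs : tsupport f ⊆ {x : Fin 3 → ℝ | 0 < ww n d x}) : Continuous (WFψ n d p f) := by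
  refine glue_cont (isOpen_ww n d) (isClosed_tsupport f) hfs ?_ ?_
  · exact (((cont_ww n d).continuousOn).rpow_const fun x hx => Or.inl (ne_of_gt hx)).mul
      ((cont_psif p f hp hfc).continuousOn)
  · intro x hx
    simp [WFψ, image_eq_zero_of_notMem_tsupport hx]

lemma cont_D1_apply (hp : 1 < p) (hε : 0 < ε) (hfc : Continuous f)
    (hfd' : Continuous (fderiv ℝ f))
    (hfs : tsupport f ⊆ {x : Fin 3 → ℝ | 0 < ww n d x})
    {vv : (Fin 3 → ℝ) → (Fin 3 → ℝ)} (hvv : Continuous vv) :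
    Continuous fun x => D1 n d p γ ε f x (vv x) := by
  have heq : (fun x => D1 n d p γ ε f x (vv x)) = fun x =>
      (γ * ((p - 2) / 2 * SS' n p ε x * (2 * aa n x * aa n x) + SS n p ε x) * WF1 n d p f x)
          * (La n (vv x))
        + (γ * ((p - 2) / 2 * SS' n p ε x * (2 * aa n x * bb n x)) * WF1 n d p f x)
          * (Lb n (vv x))
        + (γ * ((1 - p) * SS n p ε x * aa n x) * WF0 n d p f x) * (Lw n (vv x))
        + (γ * (SS n p ε x * aa n x * p) * WFψ n d p f x) * (fderiv ℝ f x (vv x)) := by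
    funext x
    simp [D1]
  rw [heq]
  have h1 := cont_SS n p ε hε
  have h2 := cont_SS' n p ε hε
  have h3 := cont_aa n
  have h4 := cont_bb n
  have h5 := cont_WF1 n d p f hp hfc hfs
  have h6 := cont_WF0 n d p f hp hfc hfs
  have h7 := cont_WFψ n d p f hp hfc hfs
  have h8 : Continuous fun x => fderiv ℝ f x (vv x) := hfd'.clm_apply hvv
  have h9 : Continuous fun x => La n (vv x) := (La n).continuous.comp hvv
  have h10 : Continuous fun x => Lb n (vv x) := (Lb n).continuous.comp hvv
  have h11 : Continuous fun x => Lw n (vv x) := (Lw n).continuous.comp hvv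
  fun_prop

lemma cont_D2_apply (hp : 1 < p) (hε : 0 < ε) (hfc : Continuous f)
    (hfd' : Continuous (fderiv ℝ f))
    (hfs : tsupport f ⊆ {x : Fin 3 → ℝ | 0 < ww n d x})
    {vv : (Fin 3 → ℝ) → (Fin 3 → ℝ)} (hvv : Continuous vv) :
    Continuous fun x => D2 n d p γ ε f x (vv x) := by
  have heq : (fun x => D2 n d p γ ε f x (vv x)) = fun x =>
      (γ * ((p - 2) / 2 * SS' n p ε x * (2 * aa n x * bb n x)) * WF1 n d p f x)
          * (La n (vv x))
        + (γ * ((p - 2) / 2 * SS' n p ε x * (2 * bb n x * bb n x) + SS n p ε x) * WF1 n d p f x)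
          * (Lb n (vv x))
        + (γ * ((1 - p) * SS n p ε x * bb n x) * WF0 n d p f x) * (Lw n (vv x))
        + (γ * (SS n p ε x * bb n x * p) * WFψ n d p f x) * (fderiv ℝ f x (vv x)) := by
    funext x
    simp [D2]
  rw [heq]
  have h1 := cont_SS n p ε hε
  have h2 := cont_SS' n p ε hε
  have h3 := cont_aa n
  have h4 := cont_bb n
  have h5 := cont_WF1 n d p f hp hfc hfs
  have h6 := cont_WF0 n d p f hp hfc hfs
  have h7 := cont_WFψ n d p f hp hfc hfs
  have h8 : Continuous fun x => fderiv ℝ f x (vv x) := hfd'.clm_apply hvv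
  have h9 : Continuous fun x => La n (vv x) := (La n).continuous.comp hvv
  have h10 : Continuous fun x => Lb n (vv x) := (Lb n).continuous.comp hvv
  have h11 : Continuous fun x => Lw n (vv x) := (Lw n).continuous.comp hvv
  fun_prop

lemma D1_apply_zero (hp : 1 < p) {x : Fin 3 → ℝ} (hx : f x = 0) (v : Fin 3 → ℝ) :
    D1 n d p γ ε f x v = 0 := by
  simp [D1, WF1, WF0, WFψ, FF_zero p f hp hx, hx]

lemma D2_apply_zero (hp : 1 < p) {x : Fin 3 → ℝ} (hx : f x = 0) (v : Fin 3 → ℝ) :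
    D2 n d p γ ε f x v = 0 := by
  simp [D2, WF1, WF0, WFψ, FF_zero p f hp hx, hx]

lemma cont_RR (hp : 1 < p) (hε : 0 < ε) (hfc : Continuous f)
    (hfs : tsupport f ⊆ {x : Fin 3 → ℝ | 0 < ww n d x}) : Continuous (RR n d p ε f) :=
  ((cont_SS n p ε hε).mul (cont_gg n)).mul (cont_WF0 n d p f hp hfc hfs)

lemma cont_KK (hp : 1 < p) (hε : 0 < ε) (hfc : Continuous f)
    (hfs : tsupport f ⊆ {x : Fin 3 → ℝ | 0 < ww n d x}) : Continuous (KK n d p ε f) := by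
  have h1 : Continuous fun x => (gg n x + ε) ^ ((p - 2) / 2 * (p / (p - 1))) := by
    refine ((cont_gg n).add continuous_const).rpow_const fun x => Or.inl ?_
    exact (lt_of_lt_of_le hε (le_add_of_nonneg_left (gg_nonneg n x))).ne'
  have h2 : Continuous fun x => gg n x ^ (p / (p - 1) / 2) := by
    refine (cont_gg n).rpow_const fun x => Or.inr ?_
    have h1p : 0 < p - 1 := by linarith
    positivity
  exact (h1.mul h2).mul (cont_WF0 n d p f hp hfc hfs)

lemma cont_R0 (hp : 1 < p) (hfc : Continuous f)
    (hfs : tsupport f ⊆ {x : Fin 3 → ℝ | 0 < ww n d x}) : Continuous (R0 n d p f) := by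
  have h2 : Continuous fun x => gg n x ^ (p / 2) := by
    refine (cont_gg n).rpow_const fun x => Or.inr (by positivity)
  exact h2.mul (cont_WF0 n d p f hp hfc hfs)

lemma cont_v1 : Continuous fun x : Fin 3 → ℝ => ![(1:ℝ), 0, 2 * x 1] := by
  refine continuous_pi ?_
  intro i
  fin_cases i <;> simp <;> fun_prop

lemma cont_v2 : Continuous fun x : Fin 3 → ℝ => ![(0:ℝ), 1, -2 * x 0] := by
  refine continuous_pi ?_
  intro i
  fin_cases i <;> simp <;> fun_prop

lemma cont_LHS (hp : 1 < p) (hfd' : Continuous (fderiv ℝ f)) :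
    Continuous fun x => ((X1H f x) ^ 2 + (X2H f x) ^ 2) ^ (p / 2) := by
  have h1 : Continuous (X1H f) := hfd'.clm_apply cont_v1
  have h2 : Continuous (X2H f) := hfd'.clm_apply cont_v2
  exact ((h1.pow 2).add (h2.pow 2)).rpow_const fun x => Or.inr (by positivity)

lemma G1_zero (hp : 1 < p) {x : Fin 3 → ℝ} (hx : f x = 0) : G1 n d p γ ε f x = 0 := by
  simp [G1, WF1, FF_zero p f hp hx]

lemma G2_zero (hp : 1 < p) {x : Fin 3 → ℝ} (hx : f x = 0) : G2 n d p γ ε f x = 0 := by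
  simp [G2, WF1, FF_zero p f hp hx]

lemma int_D1_zero (hp : 1 < p) (hε : 0 < ε) (hfC : ContDiff ℝ (⊤ : ℕ∞) f)
    (hfcs : HasCompactSupport f)
    (hfs : tsupport f ⊆ {x : Fin 3 → ℝ | 0 < ww n d x}) :
    ∫ x : Fin 3 → ℝ, D1 n d p γ ε f x ![1, 0, 2 * x 1] = 0 := by
  have hfd : Differentiable ℝ f := hfC.differentiable (by simp)
  have hfd' : Continuous (fderiv ℝ f) := hfC.continuous_fderiv (by simp)
  have hfc : Continuous f := hfC.continuous
  have hG : ∀ x, HasFDerivAt (G1 n d p γ ε f) (D1 n d p γ ε f x) x :=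
    fun x => (hasFDerivAt_G1G2 n d p γ ε f hp hε hfd hfs x).1
  have hdiffG : Differentiable ℝ (G1 n d p γ ε f) := fun x => (hG x).differentiableAt
  have hfderiv : ∀ x, fderiv ℝ (G1 n d p γ ε f) x = D1 n d p γ ε f x :=
    fun x => (hG x).fderiv
  have hGcs : HasCompactSupport (G1 n d p γ ε f) :=
    hcs_of_subset hfcs (fun x hx => G1_zero n d p γ ε f hp hx)
  have hsplit : ∀ x : Fin 3 → ℝ, D1 n d p γ ε f x ![1, 0, 2 * x 1]
      = D1 n d p γ ε f x ![1, 0, 0] + (2 * x 1) * D1 n d p γ ε f x ![0, 0, 1] := by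
    intro x
    have hv : (![1, 0, 2 * x 1] : Fin 3 → ℝ) = ![1, 0, 0] + (2 * x 1) • ![0, 0, 1] := by
      funext i
      fin_cases i <;> simp
    rw [hv, map_add, _root_.map_smul, smul_eq_mul]
  have hc1 : Continuous fun x => D1 n d p γ ε f x ![1, 0, 0] :=
    cont_D1_apply n d p γ ε f hp hε hfc hfd' hfs continuous_const
  have hc2 : Continuous fun x => D1 n d p γ ε f x ![0, 0, 1] :=
    cont_D1_apply n d p γ ε f hp hε hfc hfd' hfs continuous_const
  have hi1 : Integrable (fun x : Fin 3 → ℝ => D1 n d p γ ε f x ![1, 0, 0]) :=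
    hc1.integrable_of_hasCompactSupport
      (hcs_of_subset hfcs (fun x hx => D1_apply_zero n d p γ ε f hp hx _))
  have hi2 : Integrable (fun x : Fin 3 → ℝ => (2 * x 1) * D1 n d p γ ε f x ![0, 0, 1]) :=
    ((continuous_const.mul (continuous_apply 1)).mul hc2).integrable_of_hasCompactSupport
      (hcs_of_subset hfcs (fun x hx => by simp only [Pi.mul_apply]; rw [D1_apply_zero n d p γ ε f hp hx _]; ring))
  calc ∫ x : Fin 3 → ℝ, D1 n d p γ ε f x ![1, 0, 2 * x 1]
      = ∫ x : Fin 3 → ℝ, (D1 n d p γ ε f x ![1, 0, 0]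
          + (2 * x 1) * D1 n d p γ ε f x ![0, 0, 1]) := by
        exact integral_congr_ae (Filter.Eventually.of_forall hsplit)
    _ = (∫ x : Fin 3 → ℝ, D1 n d p γ ε f x ![1, 0, 0])
          + ∫ x : Fin 3 → ℝ, (2 * x 1) * D1 n d p γ ε f x ![0, 0, 1] :=
        integral_add hi1 hi2
    _ = 0 := by
        have hz1 : ∫ x : Fin 3 → ℝ, D1 n d p γ ε f x ![1, 0, 0] = 0 := by
          rw [show (fun x : Fin 3 → ℝ => D1 n d p γ ε f x ![1, 0, 0])
            = fun x => fderiv ℝ (G1 n d p γ ε f) x ![1, 0, 0] from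
            funext fun x => by rw [hfderiv x]]
          exact ibp_const hdiffG hGcs (by
            rw [show (fun x : Fin 3 → ℝ => fderiv ℝ (G1 n d p γ ε f) x ![1, 0, 0])
              = fun x => D1 n d p γ ε f x ![1, 0, 0] from funext fun x => by rw [hfderiv x]]
            exact hc1)
        have hz2 : ∫ x : Fin 3 → ℝ, (2 * x 1) * D1 n d p γ ε f x ![0, 0, 1] = 0 := by
          rw [show (fun x : Fin 3 → ℝ => (2 * x 1) * D1 n d p γ ε f x ![0, 0, 1])
            = fun x => (2 * x 1) * fderiv ℝ (G1 n d p γ ε f) x ![0, 0, 1] from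
            funext fun x => by rw [hfderiv x]]
          refine ibp_lin hdiffG hGcs 2 1 (by simp) ?_
          rw [show (fun x : Fin 3 → ℝ => fderiv ℝ (G1 n d p γ ε f) x ![0, 0, 1])
            = fun x => D1 n d p γ ε f x ![0, 0, 1] from funext fun x => by rw [hfderiv x]]
          exact hc2
        rw [hz1, hz2]
        ring

lemma int_D2_zero (hp : 1 < p) (hε : 0 < ε) (hfC : ContDiff ℝ (⊤ : ℕ∞) f)
    (hfcs : HasCompactSupport f)
    (hfs : tsupport f ⊆ {x : Fin 3 → ℝ | 0 < ww n d x}) :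
    ∫ x : Fin 3 → ℝ, D2 n d p γ ε f x ![0, 1, -2 * x 0] = 0 := by
  have hfd : Differentiable ℝ f := hfC.differentiable (by simp)
  have hfd' : Continuous (fderiv ℝ f) := hfC.continuous_fderiv (by simp)
  have hfc : Continuous f := hfC.continuous
  have hG : ∀ x, HasFDerivAt (G2 n d p γ ε f) (D2 n d p γ ε f x) x :=
    fun x => (hasFDerivAt_G1G2 n d p γ ε f hp hε hfd hfs x).2
  have hdiffG : Differentiable ℝ (G2 n d p γ ε f) := fun x => (hG x).differentiableAt
  have hfderiv : ∀ x, fderiv ℝ (G2 n d p γ ε f) x = D2 n d p γ ε f x :=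
    fun x => (hG x).fderiv
  have hGcs : HasCompactSupport (G2 n d p γ ε f) :=
    hcs_of_subset hfcs (fun x hx => G2_zero n d p γ ε f hp hx)
  have hsplit : ∀ x : Fin 3 → ℝ, D2 n d p γ ε f x ![0, 1, -2 * x 0]
      = D2 n d p γ ε f x ![0, 1, 0] + (-2 * x 0) * D2 n d p γ ε f x ![0, 0, 1] := by
    intro x
    have hv : (![0, 1, -2 * x 0] : Fin 3 → ℝ) = ![0, 1, 0] + (-2 * x 0) • ![0, 0, 1] := by
      funext i
      fin_cases i <;> simp
    rw [hv, map_add, _root_.map_smul, smul_eq_mul]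
  have hc1 : Continuous fun x => D2 n d p γ ε f x ![0, 1, 0] :=
    cont_D2_apply n d p γ ε f hp hε hfc hfd' hfs continuous_const
  have hc2 : Continuous fun x => D2 n d p γ ε f x ![0, 0, 1] :=
    cont_D2_apply n d p γ ε f hp hε hfc hfd' hfs continuous_const
  have hi1 : Integrable (fun x : Fin 3 → ℝ => D2 n d p γ ε f x ![0, 1, 0]) :=
    hc1.integrable_of_hasCompactSupport
      (hcs_of_subset hfcs (fun x hx => D2_apply_zero n d p γ ε f hp hx _))
  have hi2 : Integrable (fun x : Fin 3 → ℝ => (-2 * x 0) * D2 n d p γ ε f x ![0, 0, 1]) :=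
    ((continuous_const.mul (continuous_apply 0)).mul hc2).integrable_of_hasCompactSupport
      (hcs_of_subset hfcs (fun x hx => by simp only [Pi.mul_apply]; rw [D2_apply_zero n d p γ ε f hp hx _]; ring))
  calc ∫ x : Fin 3 → ℝ, D2 n d p γ ε f x ![0, 1, -2 * x 0]
      = ∫ x : Fin 3 → ℝ, (D2 n d p γ ε f x ![0, 1, 0]
          + (-2 * x 0) * D2 n d p γ ε f x ![0, 0, 1]) := by
        exact integral_congr_ae (Filter.Eventually.of_forall hsplit)
    _ = (∫ x : Fin 3 → ℝ, D2 n d p γ ε f x ![0, 1, 0])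
          + ∫ x : Fin 3 → ℝ, (-2 * x 0) * D2 n d p γ ε f x ![0, 0, 1] :=
        integral_add hi1 hi2
    _ = 0 := by
        have hz1 : ∫ x : Fin 3 → ℝ, D2 n d p γ ε f x ![0, 1, 0] = 0 := by
          rw [show (fun x : Fin 3 → ℝ => D2 n d p γ ε f x ![0, 1, 0])
            = fun x => fderiv ℝ (G2 n d p γ ε f) x ![0, 1, 0] from
            funext fun x => by rw [hfderiv x]]
          exact ibp_const hdiffG hGcs (by
            rw [show (fun x : Fin 3 → ℝ => fderiv ℝ (G2 n d p γ ε f) x ![0, 1, 0])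
              = fun x => D2 n d p γ ε f x ![0, 1, 0] from funext fun x => by rw [hfderiv x]]
            exact hc1)
        have hz2 : ∫ x : Fin 3 → ℝ, (-2 * x 0) * D2 n d p γ ε f x ![0, 0, 1] = 0 := by
          rw [show (fun x : Fin 3 → ℝ => (-2 * x 0) * D2 n d p γ ε f x ![0, 0, 1])
            = fun x => (-2 * x 0) * fderiv ℝ (G2 n d p γ ε f) x ![0, 0, 1] from
            funext fun x => by rw [hfderiv x]]
          refine ibp_lin hdiffG hGcs (-2) 0 (by simp) ?_
          rw [show (fun x : Fin 3 → ℝ => fderiv ℝ (G2 n d p γ ε f) x ![0, 0, 1])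
            = fun x => D2 n d p γ ε f x ![0, 0, 1] from funext fun x => by rw [hfderiv x]]
          exact hc2
        rw [hz1, hz2]
        ring

def bfun (x : Fin 3 → ℝ) : ℝ := (gg n x + 1) ^ (p / 2) * WF0 n d p f x

lemma WF0_nonneg (hp : 1 < p) (hfs : tsupport f ⊆ {x : Fin 3 → ℝ | 0 < ww n d x})
    (x : Fin 3 → ℝ) : 0 ≤ WF0 n d p f x := by
  by_cases hfx : f x = 0
  · simp [WF0, FF_zero p f hp hfx]
  · have hx : 0 < ww n d x := hfs (subset_tsupport f hfx)
    exact mul_nonneg (Real.rpow_nonneg hx.le _) (Real.rpow_nonneg (abs_nonneg _) _)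

lemma RR_le_bfun (hp : 1 < p) (hε : 0 < ε) (hε1 : ε ≤ 1)
    (hfs : tsupport f ⊆ {x : Fin 3 → ℝ | 0 < ww n d x}) (x : Fin 3 → ℝ) :
    ‖RR n d p ε f x‖ ≤ bfun n d p f x := by
  have hgg := gg_nonneg n x
  have hggε : 0 < gg n x + ε := lt_of_lt_of_le hε (le_add_of_nonneg_left hgg)
  have hWF0 := WF0_nonneg n d p f hp hfs x
  have hSS : 0 ≤ SS n p ε x := Real.rpow_nonneg hggε.le _
  have key : SS n p ε x * gg n x ≤ (gg n x + 1) ^ (p / 2) := by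
    calc SS n p ε x * gg n x ≤ SS n p ε x * (gg n x + ε) :=
          mul_le_mul_of_nonneg_left (by linarith) hSS
      _ = (gg n x + ε) ^ ((p - 2) / 2 + 1) := by
          rw [Real.rpow_add_one hggε.ne' ((p - 2) / 2)]; rfl
      _ = (gg n x + ε) ^ (p / 2) := by rw [show (p - 2) / 2 + 1 = p / 2 by ring]
      _ ≤ (gg n x + 1) ^ (p / 2) :=
          Real.rpow_le_rpow hggε.le (by linarith) (by positivity)
  rw [RR, Real.norm_eq_abs, abs_of_nonneg (mul_nonneg (mul_nonneg hSS hgg) hWF0), bfun]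
  exact mul_le_mul_of_nonneg_right key hWF0

lemma KK_le_bfun (hp : 1 < p) (hε : 0 < ε) (hε1 : ε ≤ 1)
    (hfs : tsupport f ⊆ {x : Fin 3 → ℝ | 0 < ww n d x}) (x : Fin 3 → ℝ) :
    ‖KK n d p ε f x‖ ≤ bfun n d p f x := by
  have hgg := gg_nonneg n x
  have hggε : 0 < gg n x + ε := lt_of_lt_of_le hε (le_add_of_nonneg_left hgg)
  have hWF0 := WF0_nonneg n d p f hp hfs x
  have hp1 : (0:ℝ) < p - 1 := by linarith
  have hqpos : (0:ℝ) ≤ p / (p - 1) / 2 := by positivity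
  have key : (gg n x + ε) ^ ((p - 2) / 2 * (p / (p - 1))) * gg n x ^ (p / (p - 1) / 2)
      ≤ (gg n x + 1) ^ (p / 2) := by
    calc (gg n x + ε) ^ ((p - 2) / 2 * (p / (p - 1))) * gg n x ^ (p / (p - 1) / 2)
        ≤ (gg n x + ε) ^ ((p - 2) / 2 * (p / (p - 1))) * (gg n x + ε) ^ (p / (p - 1) / 2) :=
          mul_le_mul_of_nonneg_left
            (Real.rpow_le_rpow hgg (by linarith) hqpos) (Real.rpow_nonneg hggε.le _)
      _ = (gg n x + ε) ^ ((p - 2) / 2 * (p / (p - 1)) + p / (p - 1) / 2) :=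
          (Real.rpow_add hggε _ _).symm
      _ = (gg n x + ε) ^ (p / 2) := by
          rw [show (p - 2) / 2 * (p / (p - 1)) + p / (p - 1) / 2 = p / 2 by
            field_simp; ring]
      _ ≤ (gg n x + 1) ^ (p / 2) :=
          Real.rpow_le_rpow hggε.le (by linarith) (by positivity)
  have hnn : 0 ≤ (gg n x + ε) ^ ((p - 2) / 2 * (p / (p - 1))) * gg n x ^ (p / (p - 1) / 2) :=
    mul_nonneg (Real.rpow_nonneg hggε.le _) (Real.rpow_nonneg hgg _)
  rw [KK, Real.norm_eq_abs, abs_of_nonneg (mul_nonneg hnn hWF0), bfun]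
  exact mul_le_mul_of_nonneg_right key hWF0

lemma cont_bfun (hp : 1 < p) (hfc : Continuous f)
    (hfs : tsupport f ⊆ {x : Fin 3 → ℝ | 0 < ww n d x}) : Continuous (bfun n d p f) :=
  (((cont_gg n).add continuous_const).rpow_const fun x => Or.inr (by positivity)).mul
    (cont_WF0 n d p f hp hfc hfs)

lemma tendsto_RR_pt (hp : 1 < p) (x : Fin 3 → ℝ) :
    Tendsto (fun k : ℕ => RR n d p (1 / ((k : ℝ) + 1)) f x) atTop (𝓝 (R0 n d p f x)) := by
  rcases eq_or_lt_of_le (gg_nonneg n x) with hgg0 | hggpos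
  · have h0 : ∀ k : ℕ, RR n d p (1 / ((k : ℝ) + 1)) f x = 0 := by
      intro k
      simp [RR, ← hgg0]
    have hR0 : R0 n d p f x = 0 := by
      simp [R0, ← hgg0, Real.zero_rpow (by positivity : p / 2 ≠ 0)]
    rw [hR0]
    simp only [h0]
    exact tendsto_const_nhds
  · have hεk : Tendsto (fun k : ℕ => 1 / ((k : ℝ) + 1)) atTop (𝓝 0) :=
      tendsto_one_div_add_atTop_nhds_zero_nat
    have hφ : ContinuousAt (fun e : ℝ => (gg n x + e) ^ ((p - 2) / 2)) 0 := by
      apply ContinuousAt.rpow_const (by fun_prop)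
      left
      simpa using hggpos.ne'
    have h1 : Tendsto (fun k : ℕ => (gg n x + 1 / ((k : ℝ) + 1)) ^ ((p - 2) / 2)) atTop
        (𝓝 ((gg n x + 0) ^ ((p - 2) / 2))) := hφ.tendsto.comp hεk
    have h2 := (h1.mul_const (gg n x)).mul_const (WF0 n d p f x)
    have hval : (gg n x + 0) ^ ((p - 2) / 2) * gg n x * WF0 n d p f x = R0 n d p f x := by
      rw [add_zero, R0]
      congr 1
      rw [← Real.rpow_add_one hggpos.ne' ((p - 2) / 2), show (p - 2) / 2 + 1 = p / 2 by ring]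
    rw [hval] at h2
    exact h2

lemma tendsto_KK_pt (hp : 1 < p) (x : Fin 3 → ℝ) :
    Tendsto (fun k : ℕ => KK n d p (1 / ((k : ℝ) + 1)) f x) atTop (𝓝 (R0 n d p f x)) := by
  have hp1 : (0:ℝ) < p - 1 := by linarith
  rcases eq_or_lt_of_le (gg_nonneg n x) with hgg0 | hggpos
  · have h0 : ∀ k : ℕ, KK n d p (1 / ((k : ℝ) + 1)) f x = 0 := by
      intro k
      simp [KK, ← hgg0, Real.zero_rpow (show p / (p - 1) / 2 ≠ 0 by positivity)]
    have hR0 : R0 n d p f x = 0 := by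
      simp [R0, ← hgg0, Real.zero_rpow (by positivity : p / 2 ≠ 0)]
    rw [hR0]
    simp only [h0]
    exact tendsto_const_nhds
  · have hεk : Tendsto (fun k : ℕ => 1 / ((k : ℝ) + 1)) atTop (𝓝 0) :=
      tendsto_one_div_add_atTop_nhds_zero_nat
    have hφ : ContinuousAt (fun e : ℝ => (gg n x + e) ^ ((p - 2) / 2 * (p / (p - 1)))) 0 := by
      apply ContinuousAt.rpow_const (by fun_prop)
      left
      simpa using hggpos.ne'
    have h1 : Tendsto (fun k : ℕ => (gg n x + 1 / ((k : ℝ) + 1)) ^ ((p - 2) / 2 * (p / (p - 1))))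
        atTop (𝓝 ((gg n x + 0) ^ ((p - 2) / 2 * (p / (p - 1))))) := hφ.tendsto.comp hεk
    have h2 := (h1.mul_const (gg n x ^ (p / (p - 1) / 2))).mul_const (WF0 n d p f x)
    have hval : (gg n x + 0) ^ ((p - 2) / 2 * (p / (p - 1))) * gg n x ^ (p / (p - 1) / 2)
        * WF0 n d p f x = R0 n d p f x := by
      rw [add_zero, R0]
      congr 1
      rw [← Real.rpow_add hggpos, show (p - 2) / 2 * (p / (p - 1)) + p / (p - 1) / 2 = p / 2 by
        field_simp; ring]
    rw [hval] at h2
    exact h2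

lemma WF0_zero (hp : 1 < p) {x : Fin 3 → ℝ} (hx : f x = 0) : WF0 n d p f x = 0 := by
  simp [WF0, FF_zero p f hp hx]

lemma integrable_RR (hp : 1 < p) (hε : 0 < ε) (hfc : Continuous f)
    (hfcs : HasCompactSupport f)
    (hfs : tsupport f ⊆ {x : Fin 3 → ℝ | 0 < ww n d x}) : Integrable (RR n d p ε f) :=
  (cont_RR n d p ε f hp hε hfc hfs).integrable_of_hasCompactSupport
    (hcs_of_subset hfcs fun x hx => by simp [RR, WF0_zero n d p f hp hx])

lemma integrable_KK (hp : 1 < p) (hε : 0 < ε) (hfc : Continuous f)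
    (hfcs : HasCompactSupport f)
    (hfs : tsupport f ⊆ {x : Fin 3 → ℝ | 0 < ww n d x}) : Integrable (KK n d p ε f) :=
  (cont_KK n d p ε f hp hε hfc hfs).integrable_of_hasCompactSupport
    (hcs_of_subset hfcs fun x hx => by simp [KK, WF0_zero n d p f hp hx])

lemma integrable_bfun (hp : 1 < p) (hfc : Continuous f)
    (hfcs : HasCompactSupport f)
    (hfs : tsupport f ⊆ {x : Fin 3 → ℝ | 0 < ww n d x}) : Integrable (bfun n d p f) :=
  (cont_bfun n d p f hp hfc hfs).integrable_of_hasCompactSupport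
    (hcs_of_subset hfcs fun x hx => by simp [bfun, WF0_zero n d p f hp hx])

lemma tendsto_int_RR (hp : 1 < p) (hfc : Continuous f) (hfcs : HasCompactSupport f)
    (hfs : tsupport f ⊆ {x : Fin 3 → ℝ | 0 < ww n d x}) :
    Tendsto (fun k : ℕ => ∫ x : Fin 3 → ℝ, RR n d p (1 / ((k : ℝ) + 1)) f x) atTop
      (𝓝 (∫ x : Fin 3 → ℝ, R0 n d p f x)) := by
  refine tendsto_integral_of_dominated_convergence (bfun n d p f) ?_ ?_ ?_ ?_
  · intro k
    exact (cont_RR n d p _ f hp (by positivity) hfc hfs).aestronglyMeasurable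
  · exact integrable_bfun n d p f hp hfc hfcs hfs
  · intro k
    refine Filter.Eventually.of_forall fun x => ?_
    exact RR_le_bfun n d p _ f hp (by positivity)
      (by rw [div_le_one (by positivity)]; linarith [Nat.cast_nonneg (α := ℝ) k]) hfs x
  · exact Filter.Eventually.of_forall fun x => tendsto_RR_pt n d p f hp x

lemma tendsto_int_KK (hp : 1 < p) (hfc : Continuous f) (hfcs : HasCompactSupport f)
    (hfs : tsupport f ⊆ {x : Fin 3 → ℝ | 0 < ww n d x}) :
    Tendsto (fun k : ℕ => ∫ x : Fin 3 → ℝ, KK n d p (1 / ((k : ℝ) + 1)) f x) atTop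
      (𝓝 (∫ x : Fin 3 → ℝ, R0 n d p f x)) := by
  refine tendsto_integral_of_dominated_convergence (bfun n d p f) ?_ ?_ ?_ ?_
  · intro k
    exact (cont_KK n d p _ f hp (by positivity) hfc hfs).aestronglyMeasurable
  · exact integrable_bfun n d p f hp hfc hfcs hfs
  · intro k
    refine Filter.Eventually.of_forall fun x => ?_
    exact KK_le_bfun n d p _ f hp (by positivity)
      (by rw [div_le_one (by positivity)]; linarith [Nat.cast_nonneg (α := ℝ) k]) hfs x
  · exact Filter.Eventually.of_forall fun x => tendsto_KK_pt n d p f hp x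

end S10


/-- the γ-parametrized Hardy inequality on half-spaces
`Ω⁺ = {⟨x,n⟩ > d}` in the Heisenberg group. -/
theorem stmt_10 (n : Fin 3 → ℝ) (hn : n 0 ^ 2 + n 1 ^ 2 + n 2 ^ 2 = 1) (d : ℝ)
    (p : ℝ) (hp : 1 < p) (γ : ℝ)
    (f : (Fin 3 → ℝ) → ℝ)
    (hf : ContDiff ℝ (⊤ : ℕ∞) f) (hfc : HasCompactSupport f)
    (hfs : tsupport f ⊆ {x : Fin 3 → ℝ | x 0 * n 0 + x 1 * n 1 + x 2 * n 2 > d}) :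
    ∫ x in {x : Fin 3 → ℝ | x 0 * n 0 + x 1 * n 1 + x 2 * n 2 > d},
        ((X1H f x) ^ 2 + (X2H f x) ^ 2) ^ (p / 2) ≥
      -(p - 1) * (|γ| ^ (p / (p - 1)) + γ) *
        ∫ x in {x : Fin 3 → ℝ | x 0 * n 0 + x 1 * n 1 + x 2 * n 2 > d},
          ((n 0 + 2 * x 1 * n 2) ^ 2 + (n 1 - 2 * x 0 * n 2) ^ 2) ^ (p / 2)
            / (x 0 * n 0 + x 1 * n 1 + x 2 * n 2 - d) ^ p * |f x| ^ p := by
  have hset : {x : Fin 3 → ℝ | x 0 * n 0 + x 1 * n 1 + x 2 * n 2 > d}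
      = {x : Fin 3 → ℝ | 0 < ww n d x} := by
    ext x
    simp [ww, sub_pos]
  have hfs' : tsupport f ⊆ {x : Fin 3 → ℝ | 0 < ww n d x} := hset ▸ hfs
  have hfcont : Continuous f := hf.continuous
  have hfd : Differentiable ℝ f := hf.differentiable (by simp)
  have hfd' : Continuous (fderiv ℝ f) := hf.continuous_fderiv (by simp)
  have hp0 : (0:ℝ) < p := by linarith
  -- integrand vanishing off the support
  have hvanLHS : ∀ x ∉ {x : Fin 3 → ℝ | x 0 * n 0 + x 1 * n 1 + x 2 * n 2 > d},
      ((X1H f x) ^ 2 + (X2H f x) ^ 2) ^ (p / 2) = 0 := by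
    intro x hx
    have hxK : x ∉ tsupport f := fun h => hx (hfs h)
    have h0 : fderiv ℝ f x = 0 := fderiv_of_notMem_tsupport _ hxK
    simp [X1H, X2H, h0, Real.zero_rpow (by positivity : p / 2 ≠ 0)]
  have hvanRHS : ∀ x ∉ {x : Fin 3 → ℝ | x 0 * n 0 + x 1 * n 1 + x 2 * n 2 > d},
      ((n 0 + 2 * x 1 * n 2) ^ 2 + (n 1 - 2 * x 0 * n 2) ^ 2) ^ (p / 2)
        / (x 0 * n 0 + x 1 * n 1 + x 2 * n 2 - d) ^ p * |f x| ^ p = 0 := by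
    intro x hx
    have hxK : x ∉ tsupport f := fun h => hx (hfs h)
    have h0 : f x = 0 := image_eq_zero_of_notMem_tsupport hxK
    simp [h0, Real.zero_rpow (by positivity : p ≠ 0)]
  have hRHSeq : ∀ x : Fin 3 → ℝ,
      ((n 0 + 2 * x 1 * n 2) ^ 2 + (n 1 - 2 * x 0 * n 2) ^ 2) ^ (p / 2)
        / (x 0 * n 0 + x 1 * n 1 + x 2 * n 2 - d) ^ p * |f x| ^ p = R0 n d p f x := by
    intro x
    have hgg : (n 0 + 2 * x 1 * n 2) ^ 2 + (n 1 - 2 * x 0 * n 2) ^ 2 = gg n x := by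
      rw [gg, aa, bb]; ring
    by_cases hfx : f x = 0
    · rw [R0, WF0_zero n d p f hp hfx, hfx]
      simp [Real.zero_rpow (by positivity : p ≠ 0)]
    · have hx : 0 < ww n d x := hfs' (subset_tsupport f hfx)
      rw [hgg, R0, WF0, FF]
      rw [show x 0 * n 0 + x 1 * n 1 + x 2 * n 2 - d = ww n d x from rfl]
      rw [Real.rpow_neg hx.le, div_eq_mul_inv]
      ring
  -- convert set integrals to full integrals
  rw [ge_iff_le, setIntegral_eq_integral_of_forall_compl_eq_zero hvanLHS,
    setIntegral_eq_integral_of_forall_compl_eq_zero hvanRHS]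
  rw [show (fun x : Fin 3 → ℝ =>
      ((n 0 + 2 * x 1 * n 2) ^ 2 + (n 1 - 2 * x 0 * n 2) ^ 2) ^ (p / 2)
        / (x 0 * n 0 + x 1 * n 1 + x 2 * n 2 - d) ^ p * |f x| ^ p)
    = R0 n d p f from funext hRHSeq]
  -- the key bound for each regularization parameter
  have hiLHS : Integrable (fun x : Fin 3 → ℝ => ((X1H f x) ^ 2 + (X2H f x) ^ 2) ^ (p / 2)) := by
    refine (cont_LHS p f hp hfd').integrable_of_hasCompactSupport ?_
    refine HasCompactSupport.intro hfc fun x hx => ?_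
    have h0 : fderiv ℝ f x = 0 := fderiv_of_notMem_tsupport _ hx
    simp [X1H, X2H, h0, Real.zero_rpow (by positivity : p / 2 ≠ 0)]
  have hmain : ∀ k : ℕ,
      γ * (1 - p) * (∫ x : Fin 3 → ℝ, RR n d p (1 / ((k : ℝ) + 1)) f x)
        - (p - 1) * |γ| ^ (p / (p - 1)) * (∫ x : Fin 3 → ℝ, KK n d p (1 / ((k : ℝ) + 1)) f x)
      ≤ ∫ x : Fin 3 → ℝ, ((X1H f x) ^ 2 + (X2H f x) ^ 2) ^ (p / 2) := by
    intro k
    set ε : ℝ := 1 / ((k : ℝ) + 1) with hεdef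
    have hε : 0 < ε := by positivity
    have hiRR := integrable_RR n d p ε f hp hε hfcont hfc hfs'
    have hiKK := integrable_KK n d p ε f hp hε hfcont hfc hfs'
    have hiD1 : Integrable (fun x : Fin 3 → ℝ => D1 n d p γ ε f x ![1, 0, 2 * x 1]) :=
      (cont_D1_apply n d p γ ε f hp hε hfcont hfd' hfs' cont_v1).integrable_of_hasCompactSupport
        (hcs_of_subset hfc fun x hx => D1_apply_zero n d p γ ε f hp hx _)
    have hiD2 : Integrable (fun x : Fin 3 → ℝ => D2 n d p γ ε f x ![0, 1, -2 * x 0]) :=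
      (cont_D2_apply n d p γ ε f hp hε hfcont hfd' hfs' cont_v2).integrable_of_hasCompactSupport
        (hcs_of_subset hfc fun x hx => D2_apply_zero n d p γ ε f hp hx _)
    have hintLeft : Integrable (fun x : Fin 3 → ℝ =>
        γ * (1 - p) * RR n d p ε f x - (p - 1) * |γ| ^ (p / (p - 1)) * KK n d p ε f x
          - (D1 n d p γ ε f x ![1, 0, 2 * x 1] + D2 n d p γ ε f x ![0, 1, -2 * x 0])) :=
      ((hiRR.const_mul _).sub (hiKK.const_mul _)).sub (hiD1.add hiD2)
    have hiA : Integrable (fun x : Fin 3 → ℝ => γ * (1 - p) * RR n d p ε f x) :=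
      hiRR.const_mul _
    have hiB : Integrable
        (fun x : Fin 3 → ℝ => (p - 1) * |γ| ^ (p / (p - 1)) * KK n d p ε f x) :=
      hiKK.const_mul _
    have hiAB : Integrable (fun x : Fin 3 → ℝ =>
        γ * (1 - p) * RR n d p ε f x - (p - 1) * |γ| ^ (p / (p - 1)) * KK n d p ε f x) :=
      hiA.sub hiB
    have hiCD : Integrable (fun x : Fin 3 → ℝ =>
        D1 n d p γ ε f x ![1, 0, 2 * x 1] + D2 n d p γ ε f x ![0, 1, -2 * x 0]) :=
      hiD1.add hiD2
    have hle := integral_mono hintLeft hiLHS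
      (fun x => pointwise_ineq n d p γ ε f hp hε hfd hfs' x)
    calc γ * (1 - p) * (∫ x : Fin 3 → ℝ, RR n d p ε f x)
          - (p - 1) * |γ| ^ (p / (p - 1)) * (∫ x : Fin 3 → ℝ, KK n d p ε f x)
        = ∫ x : Fin 3 → ℝ,
            (γ * (1 - p) * RR n d p ε f x - (p - 1) * |γ| ^ (p / (p - 1)) * KK n d p ε f x
              - (D1 n d p γ ε f x ![1, 0, 2 * x 1] + D2 n d p γ ε f x ![0, 1, -2 * x 0])) := by
          rw [integral_sub hiAB hiCD,
            integral_sub hiA hiB,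
            integral_const_mul, integral_const_mul, integral_add hiD1 hiD2,
            int_D1_zero n d p γ ε f hp hε hf hfc hfs',
            int_D2_zero n d p γ ε f hp hε hf hfc hfs']
          ring
      _ ≤ ∫ x : Fin 3 → ℝ, ((X1H f x) ^ 2 + (X2H f x) ^ 2) ^ (p / 2) := hle
  -- pass to the limit
  have htend : Tendsto (fun k : ℕ =>
      γ * (1 - p) * (∫ x : Fin 3 → ℝ, RR n d p (1 / ((k : ℝ) + 1)) f x)
        - (p - 1) * |γ| ^ (p / (p - 1)) * (∫ x : Fin 3 → ℝ, KK n d p (1 / ((k : ℝ) + 1)) f x))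
      atTop (𝓝 (γ * (1 - p) * (∫ x : Fin 3 → ℝ, R0 n d p f x)
        - (p - 1) * |γ| ^ (p / (p - 1)) * (∫ x : Fin 3 → ℝ, R0 n d p f x))) :=
    ((tendsto_int_RR n d p f hp hfcont hfc hfs').const_mul _).sub
      ((tendsto_int_KK n d p f hp hfcont hfc hfs').const_mul _)
  have hlim := le_of_tendsto htend (Filter.Eventually.of_forall hmain)
  calc -(p - 1) * (|γ| ^ (p / (p - 1)) + γ) * ∫ x : Fin 3 → ℝ, R0 n d p f x
      = γ * (1 - p) * (∫ x : Fin 3 → ℝ, R0 n d p f x)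
        - (p - 1) * |γ| ^ (p / (p - 1)) * (∫ x : Fin 3 → ℝ, R0 n d p f x) := by ring
    _ ≤ ∫ x : Fin 3 → ℝ, ((X1H f x) ^ 2 + (X2H f x) ^ 2) ^ (p / 2) := hlim
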